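/- Let A be an algebra over a field, e ∈ A idempotent, and let S₁ = eAef₁ ⊆ S₂ = eAef₂ be return ideals of eAe (i.e. fᵢgᵢfᵢ = fᵢ for some gᵢ ∈ eAe). Then the globalisation functor G(M) = Ae ⊗_{eAe} M takes the inclusion S₁ ↪ S₂ to an injection G(S₁) ↪ G(S₂). -/

import Mathlib

/-!
STATEMENT 4.
`A` a unital algebra over a field `k`, `e` idempotent, and `S₁ = eAe·f₁ ⊆ S₂ = eAe·f₂`
return ideals of `eAe` (i.e. `fᵢ gᵢ fᵢ = fᵢ` for some `gᵢ ∈ eAe`).  The globalisation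
functor `G(M) = Ae ⊗_{eAe} M` (realised as a quotient of the `k`-tensor product by the
balancing relations) takes the inclusion `S₁ ↪ S₂` to an *injective* map
`G(S₁) ↪ G(S₂)`; i.e. although `G` is only right exact in general, on an inclusion of
return ideals it behaves as if left exact.  The induced map `G(ψ)` is pinned down by
`a ⊗ s ↦ a ⊗ ψ(s)` on elementary tensors.
-/

open TensorProduct

section Setup

variable (k A : Type) [Field k] [Ring A] [Algebra k A]

/-- The corner `eAe = {x | e * x * e = x}` as a `k`-submodule of `A`. -/
def cornerSub (e : A) : Submodule k A where
  carrier := {x : A | e * x * e = x}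
  add_mem' := by
    intro a b ha hb
    simp only [Set.mem_setOf_eq] at *
    rw [mul_add, add_mul, ha, hb]
  zero_mem' := by simp
  smul_mem' := by
    intro c x hx
    simp only [Set.mem_setOf_eq] at *
    rw [mul_smul_comm, smul_mul_assoc, hx]

/-- The right ideal `Ae = {x | x * e = x}` as a `k`-submodule of `A`. -/
def aeSub (e : A) : Submodule k A where
  carrier := {x : A | x * e = x}
  add_mem' := by
    intro a b ha hb
    simp only [Set.mem_setOf_eq] at *
    rw [add_mul, ha, hb]
  zero_mem' := by simp
  smul_mem' := by
    intro c x hx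
    simp only [Set.mem_setOf_eq] at *
    rw [smul_mul_assoc, hx]

/-- The balancing relations defining `Ae ⊗_{eAe} S` as a quotient of `Ae ⊗[k] S`. -/
def balRel (e : A) (S : Submodule k A) : Submodule k (aeSub k A e ⊗[k] S) :=
  Submodule.span k {t : aeSub k A e ⊗[k] S |
    ∃ (a ab : aeSub k A e) (b : cornerSub k A e) (s bs : S),
      (ab : A) = (a : A) * (b : A) ∧ (bs : A) = (b : A) * (s : A) ∧
      t = ab ⊗ₜ[k] s - a ⊗ₜ[k] bs}

/-- The globalisation `G(S) = Ae ⊗_{eAe} S`. -/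
abbrev Glob (e : A) (S : Submodule k A) : Type :=
  @HasQuotient.Quotient _ _ (Submodule.hasQuotient (R := k) (M := aeSub k A e ⊗[k] S))
    (balRel k A e S)

/-- Left multiplication by `a' ∈ A` on `Ae`. -/
noncomputable def lmulAe (e a' : A) : aeSub k A e →ₗ[k] aeSub k A e :=
  (LinearMap.mulLeft k a').restrict (p := aeSub k A e) (q := aeSub k A e) (by
    intro x hx
    have hx' : (x : A) * e = x := hx
    simp only [LinearMap.mulLeft_apply]
    show (a' * x) * e = a' * x
    rw [mul_assoc, hx'])

end Setup

section Aux

variable (k A : Type) [Field k] [Ring A] [Algebra k A]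

/-- The multiplication map `G(S) → A`, `[a ⊗ s] ↦ a * s`. -/
noncomputable def mulMap (e : A) (S : Submodule k A) : Glob k A e S →ₗ[k] A :=
  Submodule.liftQ _ (TensorProduct.lift
    (((LinearMap.mul k A).comp (aeSub k A e).subtype).compl₂ S.subtype))
    (by
      rw [balRel, Submodule.span_le]
      rintro t ⟨a, ab, b, s, bs, hab, hbs, rfl⟩
      simp only [SetLike.mem_coe, LinearMap.mem_ker, map_sub, TensorProduct.lift.tmul,
        LinearMap.compl₂_apply, LinearMap.comp_apply, Submodule.subtype_apply,
        LinearMap.mul_apply', hab, hbs]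
      rw [mul_assoc, sub_self])

lemma mulMap_mk (e : A) (S : Submodule k A) (a : aeSub k A e) (s : S) :
    mulMap k A e S (Submodule.Quotient.mk (a ⊗ₜ[k] s)) = (a : A) * (s : A) := by
  simp [mulMap, Submodule.liftQ_apply]

/-- The map `A → Ae`, `x ↦ x * e`. -/
noncomputable def toAe (e : A) (he : IsIdempotentElem e) : A →ₗ[k] aeSub k A e :=
  (LinearMap.mulRight k e).codRestrict (aeSub k A e) (fun x => by
    show (x * e) * e = x * e
    rw [mul_assoc, he])

/-- The return map `A → G(S)`, `x ↦ [x e ⊗ gf]`. -/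
noncomputable def retMap (e : A) (he : IsIdempotentElem e) (S : Submodule k A) (gf : S) :
    A →ₗ[k] Glob k A e S :=
  (Submodule.mkQ _ : _ →ₗ[k] Glob k A e S) ∘ₗ ((TensorProduct.mk k (aeSub k A e) S).flip gf) ∘ₗ toAe k A e he

lemma retMap_apply (e : A) (he : IsIdempotentElem e) (S : Submodule k A) (gf : S) (x : A) :
    retMap k A e he S gf x
      = Submodule.Quotient.mk ((toAe k A e he x) ⊗ₜ[k] gf) := rfl

end Aux

theorem stmt4 (k A : Type) [Field k] [Ring A] [Algebra k A]
    (e f1 g1 f2 g2 : A) (he : IsIdempotentElem e)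
    (hf1 : f1 ∈ cornerSub k A e) (hg1 : g1 ∈ cornerSub k A e)
    (hf2 : f2 ∈ cornerSub k A e) (hg2 : g2 ∈ cornerSub k A e)
    (hret1 : f1 * g1 * f1 = f1) (hret2 : f2 * g2 * f2 = f2)
    (S1 S2 : Submodule k A)
    (hS1 : S1 = Submodule.map (LinearMap.mulRight k f1) (cornerSub k A e))
    (hS2 : S2 = Submodule.map (LinearMap.mulRight k f2) (cornerSub k A e))
    (hle : S1 ≤ S2)
    -- `φ = G(ψ)` is the map induced by the inclusion `ψ : S₁ ↪ S₂` :
    (φ : Glob k A e S1 →ₗ[k] Glob k A e S2)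
    (hφ : ∀ (a : aeSub k A e) (s : S1),
      φ (Submodule.Quotient.mk (a ⊗ₜ[k] s))
        = Submodule.Quotient.mk (a ⊗ₜ[k] (Submodule.inclusion hle s))) :
    Function.Injective φ := by
  -- basic corner facts
  have hcorner : ∀ x ∈ cornerSub k A e, e * x = x ∧ x * e = x := by
    intro x hx
    have hx' : e * x * e = x := hx
    constructor
    · conv_lhs => rw [← hx', ← mul_assoc, ← mul_assoc, he.eq]
      exact hx'
    · conv_lhs => rw [← hx', mul_assoc, he.eq]
      exact hx'
  -- every element of S1 lies in the corner and satisfies `s g1 f1 = s`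
  have hS1mem : ∀ s : S1, (s : A) ∈ cornerSub k A e ∧ (s : A) * g1 * f1 = s := by
    intro s
    have hmem : (s : A) ∈ Submodule.map (LinearMap.mulRight k f1) (cornerSub k A e) :=
      hS1 ▸ s.2
    obtain ⟨c, hc, hcs⟩ := hmem
    rw [LinearMap.mulRight_apply] at hcs
    constructor
    · show e * (s : A) * e = s
      rw [← hcs, ← mul_assoc, (hcorner c hc).1, mul_assoc, (hcorner f1 hf1).2]
    · rw [← hcs, mul_assoc, mul_assoc, ← mul_assoc f1 g1 f1, hret1]
  -- `g1 * f1 ∈ S1`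
  have hgf1 : g1 * f1 ∈ S1 := by
    rw [hS1, Submodule.mem_map]
    refine ⟨g1 * f1 * g1, ?_, ?_⟩
    · show e * (g1 * f1 * g1) * e = g1 * f1 * g1
      rw [← mul_assoc, ← mul_assoc, (hcorner g1 hg1).1, mul_assoc (g1 * f1) g1 e,
        (hcorner g1 hg1).2]
    · rw [LinearMap.mulRight_apply, mul_assoc, mul_assoc, ← mul_assoc f1 g1 f1, hret1]
  set gf : S1 := ⟨g1 * f1, hgf1⟩ with hgf
  -- the key retraction identity `ν ∘ μ₁ = id`
  have key : ∀ x : Glob k A e S1,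
      retMap k A e he S1 gf (mulMap k A e S1 x) = x := by
    intro x
    obtain ⟨y, rfl⟩ := Submodule.Quotient.mk_surjective _ x
    induction y using TensorProduct.induction_on with
    | zero => simp
    | tmul a s =>
      rw [mulMap_mk, retMap_apply]
      have hsc := (hS1mem s).1
      have hse : (s : A) * e = s := (hcorner _ hsc).2
      have hase : ((a : A) * (s : A)) * e = (a : A) * (s : A) := by
        rw [mul_assoc, hse]
      have h1 : toAe k A e he ((a : A) * (s : A)) = ⟨(a : A) * (s : A), hase⟩ := by
        apply Subtype.ext
        show ((a : A) * (s : A)) * e = (a : A) * (s : A)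
        exact hase
      rw [h1, Submodule.Quotient.eq]
      apply Submodule.subset_span
      refine ⟨a, ⟨(a : A) * (s : A), hase⟩, ⟨(s : A), hsc⟩, gf, s, rfl, ?_, rfl⟩
      show (s : A) = (s : A) * (g1 * f1)
      rw [← mul_assoc]
      exact ((hS1mem s).2).symm
    | add u v hu hv =>
      simp only [Submodule.Quotient.mk_add, map_add, hu, hv]
  -- `μ₂ ∘ φ = μ₁`
  have hcomm : ∀ x : Glob k A e S1, mulMap k A e S2 (φ x) = mulMap k A e S1 x := by
    intro x
    obtain ⟨y, rfl⟩ := Submodule.Quotient.mk_surjective _ x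
    induction y using TensorProduct.induction_on with
    | zero => simp
    | tmul a s => rw [hφ, mulMap_mk, mulMap_mk]; rfl
    | add u v hu hv =>
      simp only [Submodule.Quotient.mk_add, map_add, hu, hv]
  -- conclude
  intro x y hxy
  have h2 : mulMap k A e S1 x = mulMap k A e S1 y := by
    rw [← hcomm x, ← hcomm y, hxy]
  calc x = retMap k A e he S1 gf (mulMap k A e S1 x) := (key x).symm
    _ = retMap k A e he S1 gf (mulMap k A e S1 y) := by rw [h2]
    _ = y := key y
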